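/- Fix g ∈ (0,1) and let u₁, u₂ be the expected-profit functions computed with bettor-belief distributions having cdfs F₁, F₂ and densities f₁, f₂ with supp(f₁) = supp(f₂) = [0,1]. If F₁ second-order stochastically dominates F₂, then for every pair of prices a ∈ (g,1) and b ∈ (1−g,1) one has u₁(a,b) < u₂(a,b); moreover u₁* < u₂*, where uᵢ* is the maximum of uᵢ over the feasible region D = {(a,b) ∈ (0,1)² : a + b ≥ 1}. -/

import Mathlib

open MeasureTheory Set
open scoped ENNReal

/-- The bookmaker's expected profit at prices `(a, b)` with belief `g`, when the bettor
belief distribution is `μ`. -/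
noncomputable def profit (g : ℝ) (μ : Measure ℝ) (a b : ℝ) : ℝ :=
  ((1 - g) / (1 - a) - g / a) * (∫ x, max (x - a) 0 ∂μ) +
    (g / (1 - b) - (1 - g) / b) * (∫ x, max ((1 - x) - b) 0 ∂μ)

/-- The feasible price region `D = {(a,b) ∈ (0,1)² : a + b ≥ 1}`. -/
def feasible : Set (ℝ × ℝ) :=
  {q : ℝ × ℝ | q.1 ∈ Ioo (0 : ℝ) 1 ∧ q.2 ∈ Ioo (0 : ℝ) 1 ∧ 1 ≤ q.1 + q.2}

/-- The cumulative distribution function of a distribution `μ` on `ℝ`. -/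
noncomputable def cdf (μ : Measure ℝ) (x : ℝ) : ℝ := (μ (Iic x)).toReal

/-- Second-order stochastic dominance of `F₁` over `F₂` for distributions on `[0,1]`:
`∫₀^Z F₁ < ∫₀^Z F₂` for all `Z ∈ (0,1)`, with equality of the integrals at `Z = 1`. -/
def SOSD (μ₁ μ₂ : Measure ℝ) : Prop :=
  (∀ Z ∈ Ioo (0 : ℝ) 1,
      (∫ z in (0 : ℝ)..Z, cdf μ₁ z) < ∫ z in (0 : ℝ)..Z, cdf μ₂ z) ∧
    (∫ z in (0 : ℝ)..(1 : ℝ), cdf μ₁ z) = ∫ z in (0 : ℝ)..(1 : ℝ), cdf μ₂ z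


lemma cdf_mono (μ : Measure ℝ) [IsFiniteMeasure μ] : Monotone (cdf μ) := fun s t hst =>
  ENNReal.toReal_le_toReal (measure_ne_top _ _) (measure_ne_top _ _)
    |>.mpr (measure_mono (Iic_subset_Iic.2 hst))

lemma toReal_Ioi (μ : Measure ℝ) [IsProbabilityMeasure μ] (s : ℝ) :
    (μ (Ioi s)).toReal = 1 - cdf μ s := by
  have h : Ioi s = (Iic s)ᶜ := (compl_Iic).symm
  rw [h, measure_compl measurableSet_Iic (measure_ne_top _ _), measure_univ,
    ENNReal.toReal_sub_of_le (by simpa using prob_le_one) (by simp)]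
  simp [cdf]

-- layer cake A
lemma keyA (μ : Measure ℝ) [IsProbabilityMeasure μ] (h1 : μ (Ioi 1) = 0)
    {a : ℝ} (ha : 0 ≤ a) (ha1 : a ≤ 1) :
    ∫ x, max (x - a) 0 ∂μ = (1 - a) - ∫ z in a..1, cdf μ z := by
  have hle1 : ∀ᵐ x ∂μ, x ≤ 1 := by
    rw [ae_iff]; simpa [not_le, Ioi] using h1
  have hmeas : AEStronglyMeasurable (fun x : ℝ => max (x - a) 0) μ :=
    ((continuous_id.sub continuous_const).max continuous_const).aestronglyMeasurable
  have hint : Integrable (fun x : ℝ => max (x - a) 0) μ := by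
    refine (integrable_const (max (1 - a) 0)).mono' hmeas ?_
    filter_upwards [hle1] with x hx
    rw [Real.norm_of_nonneg (le_max_right _ _)]
    exact max_le_max (sub_le_sub_right hx a) le_rfl
  have hnn : 0 ≤ᵐ[μ] fun x : ℝ => max (x - a) 0 := ae_of_all _ fun x => le_max_right _ _
  rw [hint.integral_eq_integral_meas_lt hnn]
  have step1 : ∫ t in Ioi (0:ℝ), (μ {x | t < max (x - a) 0}).toReal
      = ∫ t in Ioi (0:ℝ), (μ (Ioi (a + t))).toReal := by
    refine setIntegral_congr_fun measurableSet_Ioi fun t ht => ?_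
    have hset : {x : ℝ | t < max (x - a) 0} = Ioi (a + t) := by
      ext x
      simp only [mem_setOf_eq, lt_max_iff, mem_Ioi]
      have ht' : (0:ℝ) < t := ht
      constructor
      · rintro (h | h) <;> linarith
      · intro h; left; linarith
    rw [hset]
  simp only [measureReal_def]
  rw [step1]
  have step2 : ∫ t in Ioi (0:ℝ), (μ (Ioi (a + t))).toReal
      = ∫ s in Ioi a, (μ (Ioi s)).toReal := by
    rw [← integral_indicator measurableSet_Ioi, ← integral_indicator measurableSet_Ioi]
    rw [← MeasureTheory.integral_add_left_eq_self
      (fun s => (Ioi a).indicator (fun s => (μ (Ioi s)).toReal) s) a]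
    congr 1
    funext t
    by_cases ht : 0 < t
    · rw [indicator_of_mem (by exact ht) , indicator_of_mem (by simpa using ht)]
    · rw [indicator_of_notMem (by exact ht), indicator_of_notMem (by simpa using ht)]
  rw [step2]
  have step3 : ∫ s in Ioi a, (μ (Ioi s)).toReal = ∫ s in Ioc a 1, (μ (Ioi s)).toReal := by
    refine setIntegral_eq_of_subset_of_ae_diff_eq_zero measurableSet_Ioi.nullMeasurableSet
      Ioc_subset_Ioi_self ?_
    refine ae_of_all _ fun s hs => ?_
    have h1s : 1 < s := by
      rcases hs with ⟨hs1, hs2⟩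
      simp only [mem_Ioc, not_and, not_le] at hs2
      exact hs2 hs1
    have : μ (Ioi s) = 0 := measure_mono_null (Ioi_subset_Ioi h1s.le) h1
    simp [this]
  rw [step3, ← intervalIntegral.integral_of_le ha1]
  have : ∀ s, (μ (Ioi s)).toReal = 1 - cdf μ s := toReal_Ioi μ
  rw [intervalIntegral.integral_congr (g := fun s => 1 - cdf μ s) (fun s _ => this s)]
  rw [intervalIntegral.integral_sub intervalIntegrable_const ((cdf_mono μ).intervalIntegrable)]
  simp

lemma keyB (μ : Measure ℝ) [IsProbabilityMeasure μ] (h0 : μ (Iic 0) = 0)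
    (hatom : ∀ s : ℝ, μ {s} = 0) {b : ℝ} (hb : 0 ≤ b) (hb1 : b ≤ 1) :
    ∫ x, max ((1 - x) - b) 0 ∂μ = ∫ z in (0:ℝ)..(1 - b), cdf μ z := by
  have hge0 : ∀ᵐ x ∂μ, 0 ≤ x := by
    have h' : μ (Iio 0) = 0 := measure_mono_null Iio_subset_Iic_self h0
    rw [ae_iff]
    simpa [not_le, Iio] using h'
  have hmeas : AEStronglyMeasurable (fun x : ℝ => max ((1 - x) - b) 0) μ :=
    (((continuous_const.sub continuous_id).sub continuous_const).max
      continuous_const).aestronglyMeasurable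
  have hint : Integrable (fun x : ℝ => max ((1 - x) - b) 0) μ := by
    refine (integrable_const (max (1 - b) 0)).mono' hmeas ?_
    filter_upwards [hge0] with x hx
    rw [Real.norm_of_nonneg (le_max_right _ _)]
    exact max_le_max (by linarith) le_rfl
  have hnn : 0 ≤ᵐ[μ] fun x : ℝ => max ((1 - x) - b) 0 := ae_of_all _ fun x => le_max_right _ _
  rw [hint.integral_eq_integral_meas_lt hnn]
  have step1 : ∫ t in Ioi (0:ℝ), (μ {x | t < max ((1 - x) - b) 0}).toReal
      = ∫ t in Ioi (0:ℝ), (μ (Iio ((1 - b) - t))).toReal := by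
    refine setIntegral_congr_fun measurableSet_Ioi fun t ht => ?_
    have hset : {x : ℝ | t < max ((1 - x) - b) 0} = Iio ((1 - b) - t) := by
      ext x
      simp only [mem_setOf_eq, lt_max_iff, mem_Iio]
      have ht' : (0:ℝ) < t := ht
      constructor
      · rintro (h | h) <;> linarith
      · intro h; left; linarith
    rw [hset]
  simp only [measureReal_def]
  rw [step1]
  have step2 : ∫ t in Ioi (0:ℝ), (μ (Iio ((1 - b) - t))).toReal
      = ∫ s in Iio (1 - b), (μ (Iio s)).toReal := by
    have e1 : ∫ t in Ioi (0:ℝ), (μ (Iio ((1 - b) - t))).toReal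
        = ∫ s in Iic (0:ℝ), (μ (Iio ((1 - b) + s))).toReal := by
      have := integral_comp_neg_Ioi (0:ℝ) (fun s => (μ (Iio ((1 - b) + s))).toReal)
      simp only [neg_zero] at this
      rw [← this]
      refine setIntegral_congr_fun measurableSet_Ioi fun t _ => ?_
      ring_nf
    rw [e1, integral_Iic_eq_integral_Iio,
      ← integral_indicator measurableSet_Iio, ← integral_indicator measurableSet_Iio]
    rw [← MeasureTheory.integral_add_left_eq_self
      (fun s => (Iio (1-b)).indicator (fun s => (μ (Iio s)).toReal) s) (1-b)]
    congr 1
    funext t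
    by_cases ht : t < 0
    · rw [indicator_of_mem (by exact ht), indicator_of_mem (by simp; linarith)]
    · rw [indicator_of_notMem (by exact ht), indicator_of_notMem (by simp at ht ⊢; linarith)]
  rw [step2]
  have step3 : ∫ s in Iio (1 - b), (μ (Iio s)).toReal = ∫ s in Ioo 0 (1 - b), (μ (Iio s)).toReal := by
    refine (setIntegral_eq_of_subset_of_ae_diff_eq_zero measurableSet_Iio.nullMeasurableSet
      Ioo_subset_Iio_self ?_)
    refine ae_of_all _ fun s hs => ?_
    have h0s : s ≤ 0 := by
      rcases hs with ⟨hs1, hs2⟩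
      simp only [mem_Ioo, not_and, not_lt] at hs2
      by_contra hc
      push_neg at hc
      exact absurd (hs2 hc) (not_le.mpr hs1)
    have : μ (Iio s) = 0 := measure_mono_null (fun x hx => le_of_lt (lt_of_lt_of_le hx h0s)) h0
    simp [this]
  rw [step3, ← integral_Ioc_eq_integral_Ioo, ← intervalIntegral.integral_of_le (by linarith)]
  refine intervalIntegral.integral_congr fun s _ => ?_
  have : μ (Iic s) = μ (Iio s) := by
    rw [← Iio_union_right, measure_union (by simp) (measurableSet_singleton s), hatom]
    simp
  simp [cdf, this]

lemma measure_facts (f : ℝ → ℝ) (μ : Measure ℝ)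
    (hμ : μ = MeasureTheory.volume.withDensity (fun x => ENNReal.ofReal (f x)))
    (hsupp : closure (Function.support f) = Icc (0 : ℝ) 1) :
    μ (Iic 0) = 0 ∧ μ (Ioi 1) = 0 ∧ ∀ s : ℝ, μ {s} = 0 := by
  have hzero : ∀ x : ℝ, x ∉ Icc (0:ℝ) 1 → f x = 0 := by
    intro x hx
    by_contra h
    exact hx (hsupp ▸ subset_closure (Function.mem_support.2 h))
  have hatom : ∀ s : ℝ, μ {s} = 0 := by
    intro s
    rw [hμ, withDensity_apply _ (measurableSet_singleton s)]
    rw [Measure.restrict_eq_zero.2 (by simp)]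
    simp
  refine ⟨?_, ?_, hatom⟩
  · have hIio : μ (Iio 0) = 0 := by
      rw [hμ, withDensity_apply _ measurableSet_Iio]
      rw [setLIntegral_congr_fun measurableSet_Iio
        (by intro x (hx : x < 0); show ENNReal.ofReal (f x) = 0
            rw [hzero x (by simp [Icc]; intro h; linarith)]
            simp : EqOn (fun x => ENNReal.ofReal (f x)) (fun _ => 0) (Iio (0:ℝ)))]
      simp
    have : μ (Iic 0) ≤ μ (Iio 0) + μ {(0:ℝ)} := by
      rw [← Iio_union_right]; exact measure_union_le _ _
    simpa [hIio, hatom 0] using this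
  · rw [hμ, withDensity_apply _ measurableSet_Ioi]
    rw [setLIntegral_congr_fun measurableSet_Ioi
      (by intro x (hx : 1 < x); show ENNReal.ofReal (f x) = 0
          rw [hzero x (by simp [Icc]; intro h; linarith)]
          simp : EqOn (fun x => ENNReal.ofReal (f x)) (fun _ => 0) (Ioi (1:ℝ)))]
    simp

lemma coeff1_eq (g a : ℝ) (ha : 0 < a) (ha1 : a < 1) :
    (1 - g) / (1 - a) - g / a = (a - g) / (a * (1 - a)) := by
  rw [div_sub_div _ _ (ne_of_gt (by linarith : (0:ℝ) < 1 - a)) (ne_of_gt ha),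
    div_eq_div_iff (mul_ne_zero (ne_of_gt (by linarith : (0:ℝ) < 1 - a)) (ne_of_gt ha))
      (ne_of_gt (by nlinarith : (0:ℝ) < a * (1 - a)))]
  ring

lemma coeff2_eq (g b : ℝ) (hb : 0 < b) (hb1 : b < 1) :
    g / (1 - b) - (1 - g) / b = (b - (1 - g)) / (b * (1 - b)) := by
  rw [div_sub_div _ _ (ne_of_gt (by linarith : (0:ℝ) < 1 - b)) (ne_of_gt hb),
    div_eq_div_iff (mul_ne_zero (ne_of_gt (by linarith : (0:ℝ) < 1 - b)) (ne_of_gt hb))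
      (ne_of_gt (by nlinarith : (0:ℝ) < b * (1 - b)))]
  ring

lemma tail_lt (μ₁ μ₂ : Measure ℝ) [IsFiniteMeasure μ₁] [IsFiniteMeasure μ₂]
    (hdom : SOSD μ₁ μ₂) {a : ℝ} (ha : 0 < a) (ha1 : a < 1) :
    (∫ z in a..(1:ℝ), cdf μ₂ z) < ∫ z in a..(1:ℝ), cdf μ₁ z := by
  have h₁ : (∫ z in (0:ℝ)..a, cdf μ₁ z) + ∫ z in a..(1:ℝ), cdf μ₁ z
      = ∫ z in (0:ℝ)..(1:ℝ), cdf μ₁ z :=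
    intervalIntegral.integral_add_adjacent_intervals
      ((cdf_mono μ₁).intervalIntegrable) ((cdf_mono μ₁).intervalIntegrable)
  have h₂ : (∫ z in (0:ℝ)..a, cdf μ₂ z) + ∫ z in a..(1:ℝ), cdf μ₂ z
      = ∫ z in (0:ℝ)..(1:ℝ), cdf μ₂ z :=
    intervalIntegral.integral_add_adjacent_intervals
      ((cdf_mono μ₂).intervalIntegrable) ((cdf_mono μ₂).intervalIntegrable)
  have h3 := hdom.1 a ⟨ha, ha1⟩
  have h4 := hdom.2
  linarith

/-- Core strict inequality. -/
lemma part1 (g : ℝ) (hg : g ∈ Ioo (0 : ℝ) 1)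
    (μ₁ μ₂ : Measure ℝ) [IsProbabilityMeasure μ₁] [IsProbabilityMeasure μ₂]
    (h₁0 : μ₁ (Iic 0) = 0) (h₁1 : μ₁ (Ioi 1) = 0) (h₁a : ∀ s : ℝ, μ₁ {s} = 0)
    (h₂0 : μ₂ (Iic 0) = 0) (h₂1 : μ₂ (Ioi 1) = 0) (h₂a : ∀ s : ℝ, μ₂ {s} = 0)
    (hdom : SOSD μ₁ μ₂) {a b : ℝ} (ha : a ∈ Ioo g 1) (hb : b ∈ Ioo (1 - g) 1) :
    profit g μ₁ a b < profit g μ₂ a b := by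
  obtain ⟨hg0, hg1⟩ := hg
  obtain ⟨hag, ha1⟩ := ha
  obtain ⟨hbg, hb1⟩ := hb
  have ha0 : 0 < a := lt_trans hg0 hag
  have hb0 : 0 < b := by linarith
  unfold profit
  rw [keyA μ₁ h₁1 ha0.le ha1.le, keyA μ₂ h₂1 ha0.le ha1.le,
    keyB μ₁ h₁0 h₁a hb0.le hb1.le, keyB μ₂ h₂0 h₂a hb0.le hb1.le]
  have hc1 : 0 < (1 - g) / (1 - a) - g / a := by
    rw [coeff1_eq g a ha0 ha1]
    apply div_pos (by linarith) (by nlinarith)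
  have hc2 : 0 < g / (1 - b) - (1 - g) / b := by
    rw [coeff2_eq g b hb0 hb1]
    apply div_pos (by linarith) (by nlinarith)
  have hEA : (1 - a) - (∫ z in a..(1:ℝ), cdf μ₁ z) < (1 - a) - ∫ z in a..(1:ℝ), cdf μ₂ z := by
    have := tail_lt μ₁ μ₂ hdom ha0 ha1
    linarith
  have hEB : (∫ z in (0:ℝ)..(1 - b), cdf μ₁ z) < ∫ z in (0:ℝ)..(1 - b), cdf μ₂ z :=
    hdom.1 (1 - b) ⟨by linarith, by linarith⟩
  exact add_lt_add (mul_lt_mul_of_pos_left hEA hc1) (mul_lt_mul_of_pos_left hEB hc2)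

/-- If the belief distribution `F₁` second-order stochastically dominates `F₂` (both with
densities supported on all of `[0,1]`), then `u₁(a,b) < u₂(a,b)` for every pair of prices
`a ∈ (g,1)`, `b ∈ (1−g,1)`, and the maximum profits satisfy `u₁* < u₂*`. -/
theorem prop_stochastic_dominance (g : ℝ) (hg : g ∈ Ioo (0 : ℝ) 1)
    (μ₁ μ₂ : Measure ℝ) [IsProbabilityMeasure μ₁] [IsProbabilityMeasure μ₂]
    (f₁ f₂ : ℝ → ℝ)
    (hμ₁ : μ₁ = MeasureTheory.volume.withDensity (fun x => ENNReal.ofReal (f₁ x)))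
    (hμ₂ : μ₂ = MeasureTheory.volume.withDensity (fun x => ENNReal.ofReal (f₂ x)))
    (hsupp₁ : closure (Function.support f₁) = Icc (0 : ℝ) 1)
    (hsupp₂ : closure (Function.support f₂) = Icc (0 : ℝ) 1)
    (hdom : SOSD μ₁ μ₂) :
    (∀ a ∈ Ioo g 1, ∀ b ∈ Ioo (1 - g) 1, profit g μ₁ a b < profit g μ₂ a b) ∧
      ∀ s₁ s₂ : ℝ,
        IsGreatest ((fun q : ℝ × ℝ => profit g μ₁ q.1 q.2) '' feasible) s₁ →
        IsGreatest ((fun q : ℝ × ℝ => profit g μ₂ q.1 q.2) '' feasible) s₂ →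
        s₁ < s₂ := by
  obtain ⟨h₁0, h₁1, h₁a⟩ := measure_facts f₁ μ₁ hμ₁ hsupp₁
  obtain ⟨h₂0, h₂1, h₂a⟩ := measure_facts f₂ μ₂ hμ₂ hsupp₂
  have P1 : ∀ a ∈ Ioo g 1, ∀ b ∈ Ioo (1 - g) 1, profit g μ₁ a b < profit g μ₂ a b :=
    fun a ha b hb => part1 g hg μ₁ μ₂ h₁0 h₁1 h₁a h₂0 h₂1 h₂a hdom ha hb
  refine ⟨P1, ?_⟩
  intro s₁ s₂ h₁ h₂
  obtain ⟨⟨a, b⟩, hfeas, hval⟩ := h₁.1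
  obtain ⟨hg0, hg1⟩ := hg
  obtain ⟨⟨ha0, ha1⟩, ⟨hb0, hb1⟩, _⟩ := hfeas
  set a' := if g < a then a else (g + 1) / 2 with ha'def
  set b' := if 1 - g < b then b else (2 - g) / 2 with hb'def
  have ha' : a' ∈ Ioo g 1 := by
    rw [ha'def]
    split_ifs with h
    · exact ⟨h, ha1⟩
    · exact ⟨by linarith, by linarith⟩
  have hb' : b' ∈ Ioo (1 - g) 1 := by
    rw [hb'def]
    split_ifs with h
    · exact ⟨h, hb1⟩
    · exact ⟨by linarith, by linarith⟩
  have hmono : profit g μ₁ a b ≤ profit g μ₁ a' b' := by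
    unfold profit
    apply add_le_add
    · rcases eq_or_ne a' a with h | h
      · rw [h]
      · have hna : ¬ g < a := by
          intro hlt
          exact h (by rw [ha'def, if_pos hlt])
        have ha'' : a' = (g + 1) / 2 := by rw [ha'def, if_neg hna]
        have hEA : 0 ≤ ∫ x, max (x - a) 0 ∂μ₁ := integral_nonneg fun x => le_max_right _ _
        have hEA' : 0 ≤ ∫ x, max (x - a') 0 ∂μ₁ := integral_nonneg fun x => le_max_right _ _
        have hc : (1 - g) / (1 - a) - g / a ≤ 0 := by
          rw [coeff1_eq g a ha0 ha1]
          apply div_nonpos_of_nonpos_of_nonneg (by push_neg at hna; linarith) (by nlinarith)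
        have hc' : 0 ≤ (1 - g) / (1 - a') - g / a' := by
          rw [coeff1_eq g a' (by rw [ha'']; linarith) (by rw [ha'']; linarith)]
          apply div_nonneg (by rw [ha'']; linarith)
          rcases ha' with ⟨x1, x2⟩
          nlinarith
        nlinarith [mul_nonneg hc' hEA', mul_nonneg (neg_nonneg.2 hc) hEA]
    · rcases eq_or_ne b' b with h | h
      · rw [h]
      · have hnb : ¬ 1 - g < b := by
          intro hlt
          exact h (by rw [hb'def, if_pos hlt])
        have hb'' : b' = (2 - g) / 2 := by rw [hb'def, if_neg hnb]
        have hEB : 0 ≤ ∫ x, max ((1 - x) - b) 0 ∂μ₁ := integral_nonneg fun x => le_max_right _ _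
        have hEB' : 0 ≤ ∫ x, max ((1 - x) - b') 0 ∂μ₁ := integral_nonneg fun x => le_max_right _ _
        have hc : g / (1 - b) - (1 - g) / b ≤ 0 := by
          rw [coeff2_eq g b hb0 hb1]
          apply div_nonpos_of_nonpos_of_nonneg (by push_neg at hnb; linarith) (by nlinarith)
        have hc' : 0 ≤ g / (1 - b') - (1 - g) / b' := by
          rw [coeff2_eq g b' (by rw [hb'']; linarith) (by rw [hb'']; linarith)]
          apply div_nonneg (by rw [hb'']; linarith)
          rcases hb' with ⟨x1, x2⟩
          nlinarith
        nlinarith [mul_nonneg hc' hEB', mul_nonneg (neg_nonneg.2 hc) hEB]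
  have hfeas' : (a', b') ∈ feasible := by
    refine ⟨⟨lt_trans hg0 ha'.1, ha'.2⟩, ⟨by rcases hb' with ⟨x1, _⟩; linarith, hb'.2⟩, ?_⟩
    rcases ha' with ⟨x1, _⟩
    rcases hb' with ⟨y1, _⟩
    linarith
  calc s₁ = profit g μ₁ a b := hval.symm
    _ ≤ profit g μ₁ a' b' := hmono
    _ < profit g μ₂ a' b' := P1 a' ha' b' hb'
    _ ≤ s₂ := h₂.2 ⟨(a', b'), hfeas', rfl⟩
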